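/- For every 321-avoiding permutation π of {1,...,n}, den(π) = Σ_{i : π(i) > i} i, i.e. the Denert statistic on 321-avoiding permutations reduces to the sum of positions of excedances. -/

import Mathlib

namespace MahonianStats

open Finset

/-- The value sequence of a permutation of `{1,…,n}`: position `i` (0-indexed)
carries the value `σ(i+1) ∈ {1,…,n}`; positions `≥ n` carry the junk value `0`. -/
def pf {n : ℕ} (σ : Equiv.Perm (Fin n)) : ℕ → ℕ :=
  fun i => if h : i < n then ((σ ⟨i, h⟩ : Fin n) : ℕ) + 1 else 0

/-- The value sequence of a list (junk value `0` out of range). -/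
def lf (l : List ℕ) : ℕ → ℕ := fun i => l.getD i 0

/-- Descent positions (0-indexed). -/
def desSet (n : ℕ) (f : ℕ → ℕ) : Finset ℕ :=
  (range (n - 1)).filter fun i => f (i + 1) < f i

def des (n : ℕ) (f : ℕ → ℕ) : ℕ := (desSet n f).card

/-- Major index: sum of (1-indexed) descent positions. -/
def maj (n : ℕ) (f : ℕ → ℕ) : ℕ := ∑ i ∈ desSet n f, (i + 1)

/-- Occurrences of the vincular pattern (1-32). -/
def p1_32 (n : ℕ) (f : ℕ → ℕ) : ℕ :=
  ((range n ×ˢ range n).filter fun p =>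
    p.1 < p.2 ∧ p.2 + 1 < n ∧ f p.1 < f (p.2 + 1) ∧ f (p.2 + 1) < f p.2).card

/-- Occurrences of the vincular pattern (31-2). -/
def p31_2 (n : ℕ) (f : ℕ → ℕ) : ℕ :=
  ((range n ×ˢ range n).filter fun p =>
    p.1 + 1 < p.2 ∧ f (p.1 + 1) < f p.2 ∧ f p.2 < f p.1).card

/-- Occurrences of the vincular pattern (32-1). -/
def p32_1 (n : ℕ) (f : ℕ → ℕ) : ℕ :=
  ((range n ×ˢ range n).filter fun p =>
    p.1 + 1 < p.2 ∧ f p.2 < f (p.1 + 1) ∧ f (p.1 + 1) < f p.1).card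

/-- Occurrences of the vincular pattern (21-3). -/
def p21_3 (n : ℕ) (f : ℕ → ℕ) : ℕ :=
  ((range n ×ˢ range n).filter fun p =>
    p.1 + 1 < p.2 ∧ f (p.1 + 1) < f p.1 ∧ f p.1 < f p.2).card

/-- Occurrences of the vincular pattern (3-21). -/
def p3_21 (n : ℕ) (f : ℕ → ℕ) : ℕ :=
  ((range n ×ˢ range n).filter fun p =>
    p.1 < p.2 ∧ p.2 + 1 < n ∧ f (p.2 + 1) < f p.2 ∧ f p.2 < f p.1).card

/-- Occurrences of the vincular pattern (13-2). -/
def p13_2 (n : ℕ) (f : ℕ → ℕ) : ℕ :=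
  ((range n ×ˢ range n).filter fun p =>
    p.1 + 1 < p.2 ∧ f p.1 < f p.2 ∧ f p.2 < f (p.1 + 1)).card

/-- Occurrences of the vincular pattern (2-13). -/
def p2_13 (n : ℕ) (f : ℕ → ℕ) : ℕ :=
  ((range n ×ˢ range n).filter fun p =>
    p.1 < p.2 ∧ p.2 + 1 < n ∧ f p.2 < f p.1 ∧ f p.1 < f (p.2 + 1)).card

/-- Occurrences of the vincular pattern (2-31). -/
def p2_31 (n : ℕ) (f : ℕ → ℕ) : ℕ :=
  ((range n ×ˢ range n).filter fun p =>
    p.1 < p.2 ∧ p.2 + 1 < n ∧ f (p.2 + 1) < f p.1 ∧ f p.1 < f p.2).card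

/-- Number of inversions. -/
def invp (n : ℕ) (f : ℕ → ℕ) : ℕ :=
  ((range n ×ˢ range n).filter fun p => p.1 < p.2 ∧ f p.2 < f p.1).card

def mak (n : ℕ) (f : ℕ → ℕ) : ℕ := p1_32 n f + p31_2 n f + p32_1 n f + des n f

def mad (n : ℕ) (f : ℕ → ℕ) : ℕ := 2 * p2_31 n f + p31_2 n f + des n f

def Av123 (n : ℕ) (f : ℕ → ℕ) : Prop :=
  ¬ ∃ i j k, i < j ∧ j < k ∧ k < n ∧ f i < f j ∧ f j < f k
def Av132 (n : ℕ) (f : ℕ → ℕ) : Prop :=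
  ¬ ∃ i j k, i < j ∧ j < k ∧ k < n ∧ f i < f k ∧ f k < f j
def Av213 (n : ℕ) (f : ℕ → ℕ) : Prop :=
  ¬ ∃ i j k, i < j ∧ j < k ∧ k < n ∧ f j < f i ∧ f i < f k
def Av231 (n : ℕ) (f : ℕ → ℕ) : Prop :=
  ¬ ∃ i j k, i < j ∧ j < k ∧ k < n ∧ f k < f i ∧ f i < f j
def Av312 (n : ℕ) (f : ℕ → ℕ) : Prop :=
  ¬ ∃ i j k, i < j ∧ j < k ∧ k < n ∧ f j < f k ∧ f k < f i
def Av321 (n : ℕ) (f : ℕ → ℕ) : Prop :=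
  ¬ ∃ i j k, i < j ∧ j < k ∧ k < n ∧ f k < f j ∧ f j < f i

/-- Inversions of a list of values (in position order). -/
def invL (L : List ℕ) : ℕ :=
  ((Finset.range L.length ×ˢ Finset.range L.length).filter fun p =>
    p.1 < p.2 ∧ L.getD p.2 0 < L.getD p.1 0).card

/-- The subsequence of excedance values `σ(i)` with `σ(i) > i` (1-indexed). -/
def excL (n : ℕ) (f : ℕ → ℕ) : List ℕ := ((List.range n).filter (fun i => i + 1 < f i)).map f

/-- The subsequence of non-excedance values `σ(i)` with `σ(i) ≤ i` (1-indexed). -/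
def nexcL (n : ℕ) (f : ℕ → ℕ) : List ℕ := ((List.range n).filter (fun i => f i ≤ i + 1)).map f

/-- Denert's statistic. -/
def den (n : ℕ) (f : ℕ → ℕ) : ℕ :=
  invL (excL n f) + invL (nexcL n f) +
    ∑ i ∈ (Finset.range n).filter (fun i => i + 1 < f i), (i + 1)

lemma invL_eq_zero (L : List ℕ) (h : ∀ p q, p < q → q < L.length → L.getD p 0 ≤ L.getD q 0) :
    invL L = 0 := by
  unfold invL
  rw [Finset.card_eq_zero, Finset.filter_eq_empty_iff]
  rintro ⟨p, q⟩ hm ⟨h1, h2⟩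
  simp only [Finset.mem_product, Finset.mem_range] at hm
  exact absurd h2 (not_lt.2 (h p q h1 hm.2))

lemma pigeon_exc {n : ℕ} (σ : Equiv.Perm (Fin n)) (J : Fin n) (hJ : (J : ℕ) < (σ J : ℕ)) :
    ∃ K : Fin n, J < K ∧ σ K < σ J := by
  by_contra hcon
  push_neg at hcon
  have hmaps : ∀ m ∈ Finset.Iio (σ J), σ⁻¹ m ∈ Finset.Iio J := by
    intro m hm
    simp only [Finset.mem_Iio] at hm ⊢
    rcases lt_trichotomy (σ⁻¹ m) J with hc | hc | hc
    · exact hc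
    · exfalso; rw [← hc] at hm; simp at hm
    · have := hcon _ hc
      rw [← Equiv.Perm.mul_apply, mul_inv_cancel, Equiv.Perm.one_apply] at this
      exact absurd hm (not_lt.2 this)
  have hcard := Finset.card_le_card_of_injOn (fun m => σ⁻¹ m) hmaps
    ((σ⁻¹).injective.injOn)
  simp only [Fin.card_Iio] at hcard
  omega

lemma pigeon_nexc {n : ℕ} (σ : Equiv.Perm (Fin n)) (I J : Fin n) (hIJ : I < J)
    (hI : (σ I : ℕ) ≤ I) (hJ : σ J < σ I) :
    ∃ K : Fin n, K < I ∧ σ I < σ K := by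
  by_contra hcon
  push_neg at hcon
  have hmaps : ∀ m ∈ Finset.Ioi (σ I), σ⁻¹ m ∈ Finset.Ioi I \ {J} := by
    intro m hm
    simp only [Finset.mem_Ioi] at hm
    simp only [Finset.mem_sdiff, Finset.mem_Ioi, Finset.mem_singleton]
    constructor
    · rcases lt_trichotomy I (σ⁻¹ m) with hc | hc | hc
      · exact hc
      · exfalso; rw [hc] at hm; simp at hm
      · have := hcon _ hc
        rw [← Equiv.Perm.mul_apply, mul_inv_cancel, Equiv.Perm.one_apply] at this
        exact absurd hm (not_lt.2 this)
    · intro hEq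
      have : m = σ J := by rw [← hEq, ← Equiv.Perm.mul_apply, mul_inv_cancel, Equiv.Perm.one_apply]
      rw [this] at hm
      exact absurd (hm.trans hJ) (lt_irrefl _)
  have hcard := Finset.card_le_card_of_injOn (fun m => σ⁻¹ m) hmaps
    ((σ⁻¹).injective.injOn)
  have hJmem : J ∈ Finset.Ioi I := Finset.mem_Ioi.mpr hIJ
  have hsub : ({J} : Finset (Fin n)) ⊆ Finset.Ioi I := by
    intro x hx; simp only [Finset.mem_singleton] at hx; rwa [hx]
  rw [Finset.card_sdiff_of_subset hsub] at hcard
  simp only [Fin.card_Ioi, Finset.card_singleton] at hcard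
  have h1 : (I : ℕ) < (J : ℕ) := hIJ
  have h2 : (J : ℕ) < n := J.isLt
  omega

lemma exc_mono {n : ℕ} (σ : Equiv.Perm (Fin n)) (h : Av321 n (pf σ)) {a b : ℕ}
    (hab : a < b) (hb : b < n) (ha' : a + 1 < pf σ a) (hb' : b + 1 < pf σ b) :
    pf σ a ≤ pf σ b := by
  by_contra hlt
  push_neg at hlt
  have ha : a < n := hab.trans hb
  have hB : b < (σ ⟨b, hb⟩ : ℕ) := by
    simp only [pf, dif_pos hb] at hb'; omega
  obtain ⟨K, hK1, hK2⟩ := pigeon_exc σ ⟨b, hb⟩ hB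
  refine h ⟨a, b, (K : ℕ), hab, hK1, K.isLt, ?_, hlt⟩
  have hKe : pf σ (K : ℕ) = (σ K : ℕ) + 1 := by simp [pf, K.isLt]
  have hbe : pf σ b = ((σ ⟨b, hb⟩ : Fin n) : ℕ) + 1 := by simp [pf, hb]
  have : (σ K : ℕ) < (σ ⟨b, hb⟩ : ℕ) := hK2
  omega

lemma nexc_mono {n : ℕ} (σ : Equiv.Perm (Fin n)) (h : Av321 n (pf σ)) {a b : ℕ}
    (hab : a < b) (hb : b < n) (ha' : pf σ a ≤ a + 1) (hb' : pf σ b ≤ b + 1) :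
    pf σ a ≤ pf σ b := by
  by_contra hlt
  push_neg at hlt
  have ha : a < n := hab.trans hb
  have hI : (σ ⟨a, ha⟩ : ℕ) ≤ a := by
    simp only [pf, dif_pos ha] at ha'; omega
  have hJ : σ ⟨b, hb⟩ < σ ⟨a, ha⟩ := by
    have := hlt
    simp only [pf, dif_pos ha, dif_pos hb] at this
    exact Fin.lt_def.mpr (by omega)
  obtain ⟨K, hK1, hK2⟩ := pigeon_nexc σ ⟨a, ha⟩ ⟨b, hb⟩ (Fin.lt_def.mpr hab) hI hJ
  refine h ⟨(K : ℕ), a, b, hK1, hab, hb, hlt, ?_⟩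
  have hKe : pf σ (K : ℕ) = (σ K : ℕ) + 1 := by simp [pf, K.isLt]
  have hae : pf σ a = ((σ ⟨a, ha⟩ : Fin n) : ℕ) + 1 := by simp [pf, ha]
  have : (σ ⟨a, ha⟩ : ℕ) < (σ K : ℕ) := hK2
  omega

/-- on 321-avoiding permutations, `den` is the sum of the (1-indexed)
positions of excedances. -/
theorem stmt14 (n : ℕ) (σ : Equiv.Perm (Fin n)) (h : Av321 n (pf σ)) :
    den n (pf σ) = ∑ i ∈ (Finset.range n).filter (fun i => i + 1 < pf σ i), (i + 1) := by
  have e1 : invL (excL n (pf σ)) = 0 := by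
    apply invL_eq_zero
    intro p q hpq hq
    set l := (List.range n).filter (fun i => decide (i + 1 < pf σ i)) with hl
    have hlen : (excL n (pf σ)).length = l.length := by simp [excL, hl]
    have hq' : q < l.length := by rwa [hlen] at hq
    have hp' : p < l.length := hpq.trans hq'
    have hgd : ∀ r, (hr : r < l.length) → (excL n (pf σ)).getD r 0 = pf σ l[r] := by
      intro r hr
      rw [List.getD_eq_getElem _ 0 (by rwa [hlen])]
      simp only [excL]
      rw [List.getElem_map]
    rw [hgd p hp', hgd q hq']
    have hpair : l.Pairwise (· < ·) := (List.pairwise_lt_range (n := n)).sublist List.filter_sublist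
    have hlt : l[p] < l[q] := List.pairwise_iff_getElem.mp hpair p q hp' hq' hpq
    have hfact : ∀ r, r ∈ l → r < n ∧ r + 1 < pf σ r := by
      intro r hr
      rw [hl, List.mem_filter, List.mem_range] at hr
      exact ⟨hr.1, by simpa using hr.2⟩
    obtain ⟨hq2, hPq⟩ := hfact _ (l.getElem_mem hq')
    obtain ⟨hp2, hPp⟩ := hfact _ (l.getElem_mem hp')
    exact exc_mono σ h hlt hq2 hPp hPq
  have e2 : invL (nexcL n (pf σ)) = 0 := by
    apply invL_eq_zero
    intro p q hpq hq
    set l := (List.range n).filter (fun i => decide (pf σ i ≤ i + 1)) with hl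
    have hlen : (nexcL n (pf σ)).length = l.length := by simp [nexcL, hl]
    have hq' : q < l.length := by rwa [hlen] at hq
    have hp' : p < l.length := hpq.trans hq'
    have hgd : ∀ r, (hr : r < l.length) → (nexcL n (pf σ)).getD r 0 = pf σ l[r] := by
      intro r hr
      rw [List.getD_eq_getElem _ 0 (by rwa [hlen])]
      simp only [nexcL]
      rw [List.getElem_map]
    rw [hgd p hp', hgd q hq']
    have hpair : l.Pairwise (· < ·) := (List.pairwise_lt_range (n := n)).sublist List.filter_sublist
    have hlt : l[p] < l[q] := List.pairwise_iff_getElem.mp hpair p q hp' hq' hpq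
    have hfact : ∀ r, r ∈ l → r < n ∧ pf σ r ≤ r + 1 := by
      intro r hr
      rw [hl, List.mem_filter, List.mem_range] at hr
      exact ⟨hr.1, by simpa using hr.2⟩
    obtain ⟨hq2, hPq⟩ := hfact _ (l.getElem_mem hq')
    obtain ⟨hp2, hPp⟩ := hfact _ (l.getElem_mem hp')
    exact nexc_mono σ h hlt hq2 hPp hPq
  unfold den
  rw [e1, e2]
  simp

end MahonianStats
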